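/- arXiv:2404.01853 — 4 statements merged into one kernel-verified Lean document; each statement's English description precedes it below -/
import Mathlib

section
/- Let p and q be probability vectors on {1,...,k} and let δ_y be the one-hot probability vector at class y. Then JSD(p, δ_y) < JSD(q, δ_y) if and only if p_y > q_y. -/
open Finset

/-- Jensen-Shannon divergence between two probability vectors on `Fin k`.
Terms with `P j = 0` (resp. `Q j = 0`) vanish since they are multiplied by `0`. -/
noncomputable def JSD {k : ℕ} (P Q : Fin k → ℝ) : ℝ :=
  (1 / 2) * ∑ j, P j * Real.log (P j / ((P j + Q j) / 2)) +
  (1 / 2) * ∑ j, Q j * Real.log (Q j / ((P j + Q j) / 2))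

/-- The one-hot probability vector at class `y`. -/
def oneHot {k : ℕ} (y : Fin k) : Fin k → ℝ := fun j => if j = y then 1 else 0

lemma term_eq (t : ℝ) (ht : 0 ≤ t) :
    t * Real.log (t / ((t + 1) / 2)) =
      t * Real.log 2 + t * Real.log t - t * Real.log (1 + t) := by
  rcases ht.eq_or_lt with h | h
  · simp [← h]
  · have h1 : (0:ℝ) < 1 + t := by linarith
    rw [show t / ((t + 1) / 2) = 2 * t / (1 + t) by field_simp; ring,
      Real.log_div (by positivity) h1.ne', Real.log_mul two_ne_zero h.ne']
    ring

lemma jsd_oneHot_eq {k : ℕ} (p : Fin k → ℝ) (hp0 : ∀ j, 0 ≤ p j)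
    (hp1 : ∑ j, p j = 1) (y : Fin k) :
    JSD p (oneHot y) =
      Real.log 2 + (p y * Real.log (p y) - (1 + p y) * Real.log (1 + p y)) / 2 := by
  have h1 : (0:ℝ) < 1 + p y := by have := hp0 y; linarith
  have hsum2 : ∑ j, oneHot y j * Real.log (oneHot y j / ((p j + oneHot y j) / 2)) =
      Real.log 2 - Real.log (1 + p y) := by
    rw [Finset.sum_eq_single y]
    · have hy : oneHot y y = 1 := by simp [oneHot]
      rw [hy, one_mul, show (1:ℝ) / ((p y + 1) / 2) = 2 / (1 + p y) by rw [one_div_div, add_comm],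
        Real.log_div two_ne_zero h1.ne']
    · intro j _ hj
      simp [oneHot, hj]
    · intro h; exact absurd (Finset.mem_univ y) h
  have hsum1 : ∑ j, p j * Real.log (p j / ((p j + oneHot y j) / 2)) =
      (1 - p y) * Real.log 2 +
        (p y * Real.log 2 + p y * Real.log (p y) - p y * Real.log (1 + p y)) := by
    rw [← Finset.add_sum_erase _ _ (Finset.mem_univ y)]
    have herase : ∑ j ∈ Finset.univ.erase y, p j * Real.log (p j / ((p j + oneHot y j) / 2)) =
        ∑ j ∈ Finset.univ.erase y, p j * Real.log 2 := by
      refine Finset.sum_congr rfl fun j hj => ?_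
      have hjy : j ≠ y := (Finset.mem_erase.mp hj).1
      rcases (hp0 j).eq_or_lt with h | h
      · simp [← h]
      · have : oneHot y j = 0 := by simp [oneHot, hjy]
        rw [this, add_zero, show p j / (p j / 2) = 2 by field_simp]
    have hps : ∑ j ∈ Finset.univ.erase y, p j = 1 - p y := by
      have := Finset.add_sum_erase Finset.univ p (Finset.mem_univ y)
      rw [hp1] at this; linarith
    have hy : oneHot y y = 1 := by simp [oneHot]
    rw [herase, ← Finset.sum_mul, hps, hy, term_eq (p y) (hp0 y)]
    ring
  unfold JSD
  rw [hsum1, hsum2]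
  ring

lemma g_strictAnti :
    StrictAntiOn (fun t : ℝ => t * Real.log t - (1 + t) * Real.log (1 + t)) (Set.Ici 0) := by
  apply strictAntiOn_of_deriv_neg (convex_Ici 0)
  · exact (Real.continuous_mul_log.sub
      (Real.continuous_mul_log.comp (continuous_const.add continuous_id))).continuousOn
  · intro x hx
    rw [interior_Ici] at hx
    have hx0 : (0:ℝ) < x := hx
    have h1 : (0:ℝ) < 1 + x := by linarith
    have hd1 : HasDerivAt (fun t : ℝ => t * Real.log t) (Real.log x + 1) x :=
      Real.hasDerivAt_mul_log hx0.ne'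
    have hd2 : HasDerivAt (fun t : ℝ => (1 + t) * Real.log (1 + t))
        ((Real.log (1 + x) + 1) * 1) x :=
      (Real.hasDerivAt_mul_log h1.ne').comp x ((hasDerivAt_id x).const_add 1)
    have hd := hd1.sub hd2
    rw [show (fun t : ℝ => t * Real.log t - (1 + t) * Real.log (1 + t)) =
        ((fun t : ℝ => t * Real.log t) - fun t => (1 + t) * Real.log (1 + t)) from rfl, hd.deriv]
    have : Real.log x < Real.log (1 + x) := Real.log_lt_log hx0 (by linarith)
    nlinarith

/-- For probability vectors `p, q`, one has `JSD(p, δ_y) < JSD(q, δ_y)` iff `p y > q y`. -/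
theorem jsd_oneHot_lt_iff {k : ℕ} (p q : Fin k → ℝ)
    (hp0 : ∀ j, 0 ≤ p j) (hp1 : ∑ j, p j = 1)
    (hq0 : ∀ j, 0 ≤ q j) (hq1 : ∑ j, q j = 1) (y : Fin k) :
    JSD p (oneHot y) < JSD q (oneHot y) ↔ q y < p y := by
  rw [jsd_oneHot_eq p hp0 hp1 y, jsd_oneHot_eq q hq0 hq1 y]
  have := g_strictAnti.lt_iff_gt (Set.mem_Ici.mpr (hp0 y)) (Set.mem_Ici.mpr (hq0 y))
  rw [← this]
  constructor <;> intro h <;> linarith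
end

section
/- Let T ∈ ℝ^{k×k} be a row-stochastic matrix and suppose the softmax output of the classifier on a sample with clean class c is the row vector (T_{c1}, ..., T_{ck}). Then for any observed label ỹ and any class c ≠ ỹ, the strict inequality JSD((T_{ỹ1},...,T_{ỹk}), δ_ỹ) < JSD((T_{c1},...,T_{ck}), δ_ỹ) holds if and only if T_{ỹỹ} > T_{cỹ}. -/
open Finset

lemma jsd_f_strictAnti :
    StrictAntiOn (fun t : ℝ => t * Real.log t - (1 + t) * Real.log (1 + t))
      (Set.Icc (0:ℝ) 1) := by
  apply strictAntiOn_of_deriv_neg (convex_Icc 0 1)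
  · exact (Real.continuous_mul_log.sub
      ((Real.continuous_mul_log).comp (continuous_const.add continuous_id))).continuousOn
  · intro x hx
    rw [interior_Icc] at hx
    have hx0 : (0:ℝ) < x := hx.1
    have h1 : HasDerivAt (fun t : ℝ => t * Real.log t) (Real.log x + 1) x :=
      Real.hasDerivAt_mul_log hx0.ne'
    have h2 : HasDerivAt (fun t : ℝ => (1 + t) * Real.log (1 + t))
        (Real.log (1 + x) + 1) x := by
      have hinner : HasDerivAt (fun t : ℝ => 1 + t) 1 x :=
        (hasDerivAt_id x).const_add 1
      have houter : HasDerivAt (fun u : ℝ => u * Real.log u)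
          (Real.log (1 + x) + 1) (1 + x) :=
        Real.hasDerivAt_mul_log (by positivity)
      have := houter.comp x hinner
      rw [mul_one] at this
      exact this
    have hd : HasDerivAt (fun t : ℝ => t * Real.log t - (1 + t) * Real.log (1 + t))
        (Real.log x - Real.log (1 + x)) x := by
      have := h1.sub h2
      rw [show Real.log x - Real.log (1 + x) = Real.log x + 1 - (Real.log (1 + x) + 1) by ring]
      exact this
    rw [hd.deriv]
    have : Real.log x < Real.log (1 + x) := Real.log_lt_log hx0 (by linarith)
    linarith

lemma jsd_oneHot {k : ℕ} (P : Fin k → ℝ) (hP0 : ∀ j, 0 ≤ P j)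
    (hP1 : ∑ j, P j = 1) (y : Fin k) :
    JSD P (oneHot y) = Real.log 2 +
      (1 / 2) * (P y * Real.log (P y) - (1 + P y) * Real.log (1 + P y)) := by
  have hPy1 : (0:ℝ) < 1 + P y := by have := hP0 y; linarith
  have hfirst : ∀ j : Fin k, P j * Real.log (P j / ((P j + oneHot y j) / 2)) =
      P j * Real.log 2 +
        (if j = y then P y * Real.log (P y) - P y * Real.log (1 + P y) else 0) := by
    intro j
    by_cases hj : j = y
    · subst hj
      simp only [oneHot, if_pos rfl, if_true, eq_self_iff_true]
      rcases eq_or_lt_of_le (hP0 j) with h0 | h0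
      · simp [← h0]
      · have he : P j / ((P j + 1) / 2) = P j * 2 / (1 + P j) := by
          rw [div_div_eq_mul_div]
          ring_nf
        rw [he, Real.log_div (by positivity) (ne_of_gt hPy1),
          Real.log_mul h0.ne' (by norm_num)]
        ring
    · simp only [oneHot, if_neg hj, add_zero, if_neg hj]
      rcases eq_or_lt_of_le (hP0 j) with h0 | h0
      · simp [← h0]
      · have he : P j / (P j / 2) = 2 := by field_simp
        simp [he]
  have hsecond : ∀ j : Fin k,
      oneHot y j * Real.log (oneHot y j / ((P j + oneHot y j) / 2)) =
      if j = y then Real.log 2 - Real.log (1 + P y) else 0 := by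
    intro j
    by_cases hj : j = y
    · subst hj
      simp only [oneHot, if_pos rfl, if_true, eq_self_iff_true, one_mul]
      have hne : P j + 1 ≠ 0 := by linarith [hP0 j]
      rw [Real.log_div one_ne_zero (by positivity), Real.log_one,
        Real.log_div hne (by norm_num)]
      rw [add_comm (P j) 1]
      ring
    · simp [oneHot, hj]
  unfold JSD
  rw [Finset.sum_congr rfl (fun j _ => hfirst j),
    Finset.sum_congr rfl (fun j _ => hsecond j),
    Finset.sum_add_distrib, ← Finset.sum_mul, hP1,
    Finset.sum_ite_eq' Finset.univ y, Finset.sum_ite_eq' Finset.univ y]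
  simp only [Finset.mem_univ, if_pos]
  ring

/-- For a row-stochastic matrix `T` whose row `T c` is the softmax output on a sample with
clean class `c`, and any observed label `ytil` and class `c ≠ ytil`, one has
`JSD (T ytil) δ_ytil < JSD (T c) δ_ytil` iff `T ytil ytil > T c ytil`. -/
theorem jsd_clean_lt_noisy_iff {k : ℕ}
    (T : Fin k → Fin k → ℝ)
    (hT0 : ∀ i j, 0 ≤ T i j) (hT1 : ∀ i, ∑ j, T i j = 1)
    (ytil c : Fin k) (hc : c ≠ ytil) :
    JSD (T ytil) (oneHot ytil) < JSD (T c) (oneHot ytil) ↔ T c ytil < T ytil ytil := by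
  have hmem : ∀ i, T i ytil ∈ Set.Icc (0:ℝ) 1 := by
    intro i
    refine ⟨hT0 i ytil, ?_⟩
    calc T i ytil ≤ ∑ j, T i j :=
          Finset.single_le_sum (fun j _ => hT0 i j) (Finset.mem_univ ytil)
      _ = 1 := hT1 i
  rw [jsd_oneHot (T ytil) (hT0 ytil) (hT1 ytil) ytil,
    jsd_oneHot (T c) (hT0 c) (hT1 c) ytil]
  constructor
  · intro h
    by_contra hle
    push_neg at hle
    rcases eq_or_lt_of_le hle with heq | hlt
    · rw [heq] at h; simp at h
    · have := jsd_f_strictAnti (hmem ytil) (hmem c) hlt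
      simp only at this
      linarith
  · intro h
    have := jsd_f_strictAnti (hmem c) (hmem ytil) h
    simp only at this
    linarith
end

section
/- Let k ≥ 2 and 0 ≤ r < 1, and let T ∈ ℝ^{k×k} be the uniform noise transition matrix with T_{ii} = 1 − r + r/k and T_{ij} = r/k for j ≠ i. Suppose the softmax output of the classifier on a sample with clean class c is the row vector (T_{c1}, ..., T_{ck}). Then for any observed label ỹ and any class c ≠ ỹ, JSD((T_{ỹ1},...,T_{ỹk}), δ_ỹ) < JSD((T_{c1},...,T_{ck}), δ_ỹ); that is, under uniform noise of any rate below 1, clean samples have strictly smaller JSD to the observed label than noisy samples. -/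
open Finset

lemma entropyAux_strictMono :
    StrictMonoOn (fun x : ℝ => (x + 1) * Real.log (x + 1) - x * Real.log x) (Set.Ici 0) := by
  apply strictMonoOn_of_deriv_pos (convex_Ici 0)
  · exact ((Real.continuous_mul_log.comp (continuous_id.add continuous_const)).sub
      Real.continuous_mul_log).continuousOn
  · intro x hx
    rw [interior_Ici] at hx
    have hx0 : (0:ℝ) < x := hx
    have h1 : HasDerivAt (fun x : ℝ => x * Real.log x) (Real.log x + 1) x :=
      Real.hasDerivAt_mul_log hx0.ne'
    have h2 : HasDerivAt (fun x : ℝ => (x + 1) * Real.log (x + 1))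
        ((Real.log (x + 1) + 1) * 1) x := by
      have hin : HasDerivAt (fun x : ℝ => x + 1) 1 x := (hasDerivAt_id x).add_const 1
      exact (Real.hasDerivAt_mul_log (by linarith : x + 1 ≠ 0)).comp x hin
    have h3 : HasDerivAt (fun x : ℝ => (x + 1) * Real.log (x + 1) - x * Real.log x)
        ((Real.log (x + 1) + 1) * 1 - (Real.log x + 1)) x := h2.sub h1
    rw [h3.deriv]
    have hlog : Real.log x < Real.log (x + 1) := Real.log_lt_log hx0 (by linarith)
    nlinarith

lemma JSD_oneHot {k : ℕ} (y : Fin k) (P : Fin k → ℝ) (hy : 0 ≤ P y)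
    (hS : ∑ j, P j = 1) :
    JSD P (oneHot y) =
      Real.log 2 + (1/2) * (P y * Real.log (P y) - (P y + 1) * Real.log (P y + 1)) := by
  have hy1 : (0:ℝ) < P y + 1 := by linarith
  unfold JSD oneHot
  have hsum1 : ∑ j, P j * Real.log (P j / ((P j + if j = y then 1 else 0) / 2)) =
      ∑ j, (P j * Real.log 2 +
        if j = y then P y * (Real.log (P y) - Real.log (P y + 1)) else 0) := by
    apply Finset.sum_congr rfl
    intro j _
    by_cases hj : j = y
    · subst hj
      simp only [eq_self_iff_true, if_true]
      rcases eq_or_lt_of_le hy with h0 | h0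
      · simp [← h0]
      · rw [Real.log_div h0.ne' (by positivity), Real.log_div hy1.ne' two_ne_zero]
        ring
    · simp only [if_neg hj, add_zero]
      rcases eq_or_ne (P j) 0 with h0 | h0
      · simp [h0]
      · have : P j / (P j / 2) = 2 := by field_simp
        rw [this]
  have hsum2 : ∑ j, (if j = y then (1:ℝ) else 0) *
      Real.log ((if j = y then (1:ℝ) else 0) / ((P j + if j = y then 1 else 0) / 2)) =
      Real.log 2 - Real.log (P y + 1) := by
    rw [Finset.sum_eq_single y]
    · simp only [eq_self_iff_true, if_true, one_mul]
      rw [one_div_div, Real.log_div two_ne_zero hy1.ne']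
    · intro j _ hj
      simp [if_neg hj]
    · intro h; exact absurd (Finset.mem_univ y) h
  rw [hsum1, hsum2, Finset.sum_add_distrib, ← Finset.sum_mul, hS,
    Finset.sum_ite_eq' Finset.univ y, if_pos (Finset.mem_univ y)]
  ring

/-- Under uniform (symmetric) noise of any rate `r < 1`, if the softmax output on a sample
with clean class `c` is the row `T c` of the uniform noise transition matrix, then for any
observed label `ytil` and any class `c ≠ ytil`, clean samples have strictly smaller JSD to
the observed label than noisy samples. -/
theorem jsd_clean_lt_noisy_uniform_noise
    (k : ℕ) (hk : 2 ≤ k) (r : ℝ) (hr0 : 0 ≤ r) (hr1 : r < 1)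
    (T : Fin k → Fin k → ℝ)
    (hT : ∀ i j : Fin k, T i j = if j = i then 1 - r + r / k else r / k)
    (ytil c : Fin k) (hc : c ≠ ytil) :
    JSD (T ytil) (oneHot ytil) < JSD (T c) (oneHot ytil) := by
  have hk0 : (0:ℝ) < (k:ℝ) := by positivity
  set a : ℝ := 1 - r + r / k with ha
  set b : ℝ := r / k with hb
  clear_value a b
  have hb0 : 0 ≤ b := by rw [hb]; positivity
  have hba : b < a := by rw [ha, hb]; linarith
  have ha0 : 0 ≤ a := by linarith
  have hrow : ∀ i : Fin k, ∑ j, T i j = 1 := by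
    intro i
    have h1 : ∀ j : Fin k, T i j = b + if j = i then a - b else 0 := by
      intro j; rw [hT i j]
      by_cases hj : j = i
      · rw [if_pos hj, if_pos hj]; ring
      · rw [if_neg hj, if_neg hj]; ring
    simp only [h1]
    rw [Finset.sum_add_distrib, Finset.sum_const, Finset.card_univ, Fintype.card_fin,
      Finset.sum_ite_eq' Finset.univ i, if_pos (Finset.mem_univ i), nsmul_eq_mul]
    have hkb : (k:ℝ) * b = r := by rw [hb]; field_simp
    rw [ha, hb] at *
    linarith
  have hTy : T ytil ytil = a := by rw [hT, if_pos rfl]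
  have hTc : T c ytil = b := by rw [hT, if_neg (fun h => hc h.symm)]
  rw [JSD_oneHot ytil (T ytil) (by rw [hTy]; exact ha0) (hrow ytil),
    JSD_oneHot ytil (T c) (by rw [hTc]; exact hb0) (hrow c), hTy, hTc]
  have := entropyAux_strictMono (Set.mem_Ici.mpr hb0) (Set.mem_Ici.mpr ha0) hba
  simp only at this
  linarith
end

section
/- Let k ≥ 2, 0 ≤ r < 1/2, let σ be a fixed-point-free permutation of {1,...,k}, and let T ∈ ℝ^{k×k} be the pair-flip noise transition matrix with T_{ii} = 1 − r, T_{i,σ(i)} = r, and T_{ij} = 0 otherwise. Suppose the softmax output of the classifier on a sample with clean class c is the row vector (T_{c1}, ..., T_{ck}). Then for any observed label ỹ and any class c ≠ ỹ, JSD((T_{ỹ1},...,T_{ỹk}), δ_ỹ) < JSD((T_{c1},...,T_{ck}), δ_ỹ); that is, under pairwise noise of rate below 0.5, clean samples have strictly smaller JSD to the observed label than noisy samples. -/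
open Finset

lemma mul_log_div_of_pos {x m : ℝ} (hx : 0 < x) (hm : 0 < m) :
    x * Real.log (x / m) = x * (Real.log x - Real.log m) := by
  rw [Real.log_div hx.ne' hm.ne']

lemma mul_log_self_div_half {r : ℝ} (hr : 0 ≤ r) :
    r * Real.log (r / (r / 2)) = r * Real.log 2 := by
  rcases hr.eq_or_lt with h | h
  · simp [← h]
  · have hne : r ≠ 0 := h.ne'
    have h2 : r / (r / 2) = 2 := by field_simp
    rw [h2]

lemma phi_strictAnti :
    StrictAntiOn (fun p : ℝ => p * Real.log p - (1 + p) * Real.log (1 + p))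
      (Set.Icc (0 : ℝ) 1) := by
  apply strictAntiOn_of_deriv_neg (convex_Icc 0 1)
  · exact (Real.continuous_mul_log.sub
      (Real.continuous_mul_log.comp (continuous_const.add continuous_id))).continuousOn
  · intro p hp
    rw [interior_Icc] at hp
    have h1 : HasDerivAt (fun p : ℝ => p * Real.log p) (Real.log p + 1) p :=
      Real.hasDerivAt_mul_log hp.1.ne'
    have h2 : HasDerivAt (fun p : ℝ => (1 + p) * Real.log (1 + p))
        (Real.log (1 + p) + 1) p := by
      have hne : (1 : ℝ) + p ≠ 0 := by linarith [hp.1]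
      have := (Real.hasDerivAt_mul_log hne).comp p ((hasDerivAt_id p).const_add 1)
      simpa [Function.comp_def] using this
    rw [(show HasDerivAt (fun p : ℝ => p * Real.log p - (1 + p) * Real.log (1 + p))
      (Real.log p + 1 - (Real.log (1 + p) + 1)) p from h1.sub h2).deriv]
    have hlog : Real.log p < Real.log (1 + p) := Real.log_lt_log hp.1 (by linarith [hp.1])
    linarith

lemma JSD_row (k : ℕ) (r : ℝ) (hr0 : 0 ≤ r) (hr1 : r < 1)
    (σ : Equiv.Perm (Fin k)) (hσ : ∀ i, σ i ≠ i)
    (T : Fin k → Fin k → ℝ)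
    (hT : ∀ i j : Fin k, T i j = if j = i then 1 - r else if j = σ i then r else 0)
    (i y : Fin k) :
    JSD (T i) (oneHot y) =
      Real.log 2 + (1 / 2) * (T i y * Real.log (T i y)
        - (1 + T i y) * Real.log (1 + T i y)) := by
  have h1r : (0 : ℝ) < 1 - r := by linarith
  have hq0 : 0 ≤ T i y := by
    rw [hT]; split_ifs <;> linarith
  have hTii : T i i = 1 - r := by simp [hT]
  have hTiσ : T i (σ i) = r := by simp [hT, hσ i]
  -- second sum
  have hS2 : ∑ j, oneHot y j * Real.log (oneHot y j / ((T i j + oneHot y j) / 2))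
      = Real.log 2 - Real.log (1 + T i y) := by
    rw [Fintype.sum_eq_single y (fun j hj => by simp [oneHot, hj])]
    have hOyy : oneHot y y = 1 := by simp [oneHot]
    rw [hOyy, one_mul, one_div, Real.log_inv,
      Real.log_div (by linarith : T i y + 1 ≠ 0) two_ne_zero]
    ring_nf
  -- first sum restricted to the two support points
  have hS1 : ∑ j, T i j * Real.log (T i j / ((T i j + oneHot y j) / 2))
      = T i i * Real.log (T i i / ((T i i + oneHot y i) / 2))
        + T i (σ i) * Real.log (T i (σ i) / ((T i (σ i) + oneHot y (σ i)) / 2)) := by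
    rw [← Finset.sum_subset (Finset.subset_univ ({i, σ i} : Finset (Fin k)))
      (fun j _ hj => by
        rw [Finset.mem_insert, Finset.mem_singleton] at hj
        push_neg at hj
        rw [hT, if_neg hj.1, if_neg hj.2, zero_mul]),
      Finset.sum_pair (Ne.symm (hσ i))]
  rw [JSD, hS1, hS2, hTii, hTiσ]
  rcases eq_or_ne y i with hyi | hyi
  · -- clean case: q = 1 - r
    have hOy : oneHot y i = 1 := by simp [oneHot, hyi]
    have hσy : σ i ≠ y := by rw [hyi]; exact hσ i
    have hOσ : oneHot y (σ i) = 0 := by simp [oneHot, hσy]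
    have hqy : T i y = 1 - r := by rw [hyi]; exact hTii
    rw [hOy, hOσ, hqy, add_zero, mul_log_self_div_half hr0,
      mul_log_div_of_pos h1r (by linarith : (0:ℝ) < (1 - r + 1) / 2),
      Real.log_div (by linarith : (1:ℝ) - r + 1 ≠ 0) two_ne_zero]
    ring_nf
  · have hOi : oneHot y i = 0 := by simp [oneHot, Ne.symm hyi]
    rw [hOi, add_zero]
    have hfi : (1 - r) * Real.log ((1 - r) / ((1 - r) / 2)) = (1 - r) * Real.log 2 :=
      mul_log_self_div_half (le_of_lt h1r)
    rcases eq_or_ne y (σ i) with hyσ | hyσ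
    · -- noisy case with σ i = y : q = r
      have hqy : T i y = r := by rw [hyσ]; exact hTiσ
      have hOσ : oneHot y (σ i) = 1 := by simp [oneHot, hyσ]
      rw [hqy, hOσ, hfi]
      rcases hr0.eq_or_lt with h | h
      · rw [← h]
        simp [Real.log_one]
        ring
      · rw [mul_log_div_of_pos h (by linarith : (0:ℝ) < (r + 1) / 2),
          Real.log_div (by linarith : r + 1 ≠ 0) two_ne_zero]
        ring_nf
    · -- noisy case with σ i ≠ y : q = 0
      have hqy : T i y = 0 := by
        rw [hT, if_neg hyi, if_neg hyσ]
      have hOσ : oneHot y (σ i) = 0 := by simp [oneHot, Ne.symm hyσ]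
      rw [hqy, hOσ, add_zero, hfi, mul_log_self_div_half hr0]
      simp [Real.log_one]
      ring

/-- Under pairwise (pair-flip) noise of rate `r < 1/2` given by a fixed-point-free
permutation `σ`, if the softmax output on a sample with clean class `c` is the row `T c`
of the pair-flip noise transition matrix, then for any observed label `ytil` and any class
`c ≠ ytil`, clean samples have strictly smaller JSD to the observed label than noisy
samples. -/
theorem jsd_clean_lt_noisy_pairflip_noise
    (k : ℕ) (hk : 2 ≤ k) (r : ℝ) (hr0 : 0 ≤ r) (hr1 : r < 1 / 2)
    (σ : Equiv.Perm (Fin k)) (hσ : ∀ i, σ i ≠ i)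
    (T : Fin k → Fin k → ℝ)
    (hT : ∀ i j : Fin k, T i j = if j = i then 1 - r else if j = σ i then r else 0)
    (ytil c : Fin k) (hc : c ≠ ytil) :
    JSD (T ytil) (oneHot ytil) < JSD (T c) (oneHot ytil) := by
  have hr1' : r < 1 := by linarith
  rw [JSD_row k r hr0 hr1' σ hσ T hT ytil ytil,
    JSD_row k r hr0 hr1' σ hσ T hT c ytil]
  have hclean : T ytil ytil = 1 - r := by simp [hT]
  have hq : T c ytil = r ∨ T c ytil = 0 := by
    rw [hT, if_neg (fun h => hc h.symm)]
    split_ifs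
    · exact Or.inl rfl
    · exact Or.inr rfl
  have hq0 : 0 ≤ T c ytil := by rcases hq with h | h <;> rw [h] <;> linarith
  have hq1 : T c ytil ≤ r := by rcases hq with h | h <;> rw [h] <;> linarith
  have hlt : T c ytil < 1 - r := by linarith
  have key := phi_strictAnti (Set.mem_Icc.mpr ⟨hq0, by linarith⟩)
    (Set.mem_Icc.mpr ⟨by linarith, by linarith⟩) hlt
  simp only at key
  rw [hclean]
  linarith
end
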